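/- arXiv:0805.1457 — 4 statements merged into one kernel-verified Lean document; each statement's English description precedes it below -/
import Mathlib

section
/- Let A be a one-clock priced timed automaton with a single cost function and all discrete costs 0, and let (q,x) be a state of A. Then (q,x) ⊨ AφU_{≤c}ψ if and only if (q,x) ⊨ AφUψ and (q,x) ⊨ AF_{≤c}ψ, where AφUψ denotes the unconstrained until AφU_{≥0}ψ and AF_{∼c}θ denotes A(⊤U_{∼c}θ). -/
/-! ## One-clock priced timed automata: common definitions -/

/-- Comparison operators used in clock constraints and cost constraints. -/
inductive Cmp
  | lt | le | eq | ge | gt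
  deriving DecidableEq

/-- Satisfaction of `x ∼ c`. -/
def Cmp.sat : Cmp → ℝ → ℝ → Prop
  | .lt, x, c => x < c
  | .le, x, c => x ≤ c
  | .eq, x, c => x = c
  | .ge, x, c => c ≤ x
  | .gt, x, c => c < x

/-- A guard (clock constraint) is a finite conjunction of constraints `x ∼ c`, `c ∈ ℕ`. -/
abbrev PGuard := List (Cmp × ℕ)

/-- A clock value satisfies a guard if it satisfies all its atomic constraints. -/
def PGuard.sat (g : PGuard) (x : ℝ) : Prop := ∀ p ∈ g, Cmp.sat p.1 x (p.2 : ℝ)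

/-- A transition of a one-clock priced timed automaton: source, guard, reset set
(`reset = true` iff the clock is reset), target, and discrete cost. -/
structure PTrans (Q : Type) where
  src : Q
  guard : PGuard
  reset : Bool
  tgt : Q
  dcost : ℕ

/-- A one-clock priced timed automaton with a single cost function:
a finite set `Q` of locations, an initial location, a finite set of transitions,
invariants, and a cost rate for each location (discrete costs are on transitions). -/
structure PTA (Q : Type) [Fintype Q] where
  init : Q
  E : Set (PTrans Q)
  finE : E.Finite
  Inv : Q → PGuard
  rate : Q → ℕ

variable {Q : Type} [Fintype Q]

/-- A delay move `(q,v) → (q,v+t)` of cost `t · rate q`, allowed if the invariant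
holds throughout. -/
def DelayMove (A : PTA Q) (s : Q × ℝ) (c : ℝ) (s' : Q × ℝ) : Prop :=
  ∃ t : ℝ, 0 ≤ t ∧ s' = (s.1, s.2 + t) ∧ c = t * (A.rate s.1 : ℝ) ∧
    ∀ t' : ℝ, 0 ≤ t' → t' ≤ t → PGuard.sat (A.Inv s.1) (s.2 + t')

/-- A discrete move via a transition of `A`, of cost the discrete cost of the transition. -/
def DiscMove (A : PTA Q) (s : Q × ℝ) (c : ℝ) (s' : Q × ℝ) : Prop :=
  ∃ e ∈ A.E, e.src = s.1 ∧ e.tgt = s'.1 ∧ PGuard.sat e.guard s.2 ∧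
    s'.2 = (if e.reset then 0 else s.2) ∧ PGuard.sat (A.Inv e.tgt) s'.2 ∧ c = (e.dcost : ℝ)

/-- A simple move of the timed transition system `TTS_A`. -/
def PMove (A : PTA Q) (s : Q × ℝ) (c : ℝ) (s' : Q × ℝ) : Prop :=
  DelayMove A s c s' ∨ DiscMove A s c s'

/-- `PPath A s c s'`: there is a path (finite sequence of simple moves) in `TTS_A`
from `s` to `s'` of total cost `c`. -/
inductive PPath (A : PTA Q) : (Q × ℝ) → ℝ → (Q × ℝ) → Prop
  | refl (s : Q × ℝ) : PPath A s 0 s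
  | step {s s' s'' : Q × ℝ} {c c' : ℝ} :
      PMove A s c s' → PPath A s' c' s'' → PPath A s (c + c') s''

/-- Reachability in `TTS_A` (notation `⇝*` in the paper). -/
def PReach (A : PTA Q) (s s' : Q × ℝ) : Prop := ∃ c : ℝ, PPath A s c s'

/-- A mixed move: a delay move followed by a discrete move. -/
def MixedMove (A : PTA Q) (s : Q × ℝ) (c : ℝ) (s' : Q × ℝ) : Prop :=
  ∃ (c₁ c₂ : ℝ) (m : Q × ℝ), DelayMove A s c₁ m ∧ DiscMove A m c₂ s' ∧ c = c₁ + c₂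

/-- A priced timed automaton is non-blocking. -/
def NonBlocking (A : PTA Q) : Prop :=
  ∀ (q : Q) (v : ℝ), 0 ≤ v → ∃ (c : ℝ) (s' : Q × ℝ), MixedMove A (q, v) c s'

/-- The constants appearing in the clock constraints (guards and invariants) of `A`. -/
def PTA.consts (A : PTA Q) : Set ℕ :=
  {c | (∃ e ∈ A.E, ∃ p ∈ e.guard, p.2 = c) ∨ ∃ q : Q, ∃ p ∈ A.Inv q, p.2 = c}

/-- The lcm of all positive cost rates labeling a location of `A`. -/
def posLcm (A : PTA Q) : ℕ :=
  Finset.lcm (Finset.univ.filter fun q => 0 < A.rate q) A.rate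

/-! ## WCTL: syntax and semantics -/

/-- Syntax of WCTL over atomic propositions `AP` (with a trivially true formula `tt`). -/
inductive WCTL (AP : Type)
  | tt : WCTL AP
  | atom : AP → WCTL AP
  | not : WCTL AP → WCTL AP
  | or : WCTL AP → WCTL AP → WCTL AP
  | EU : WCTL AP → Cmp → ℕ → WCTL AP → WCTL AP
  | AU : WCTL AP → Cmp → ℕ → WCTL AP → WCTL AP

/-- An infinite run of `A` from `s₀`: an infinite sequence of mixed moves,
`cst n` being the cost of the `n`-th mixed move. -/
structure InfRun (A : PTA Q) (s₀ : Q × ℝ) where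
  st : ℕ → Q × ℝ
  cst : ℕ → ℝ
  first : st 0 = s₀
  step : ∀ n : ℕ, MixedMove A (st n) (cst n) (st (n + 1))

/-- Satisfaction of WCTL formulas over states of a labeled one-clock priced timed
automaton (`L` is the labeling function). -/
def WCTLsat {AP : Type} (A : PTA Q) (L : Q → AP → Prop) : WCTL AP → (Q × ℝ) → Prop
  | .tt, _ => True
  | .atom a, s => L s.1 a
  | .not φ, s => ¬ WCTLsat A L φ s
  | .or φ ψ, s => WCTLsat A L φ s ∨ WCTLsat A L ψ s
  | .EU φ cmp c ψ, s => ∃ ρ : InfRun A s, ∃ π : ℕ, 0 < π ∧ WCTLsat A L ψ (ρ.st π) ∧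
      (∀ π' : ℕ, 0 < π' → π' < π → WCTLsat A L φ (ρ.st π')) ∧
      Cmp.sat cmp (∑ i ∈ Finset.range π, ρ.cst i) (c : ℝ)
  | .AU φ cmp c ψ, s => ∀ ρ : InfRun A s, ∃ π : ℕ, 0 < π ∧ WCTLsat A L ψ (ρ.st π) ∧
      (∀ π' : ℕ, 0 < π' → π' < π → WCTLsat A L φ (ρ.st π')) ∧
      Cmp.sat cmp (∑ i ∈ Finset.range π, ρ.cst i) (c : ℝ)

/-- A cost constraint `∼ c` is trivial iff it is `≥ 0`. -/
def isTrivialC : Cmp → ℕ → Bool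
  | .ge, 0 => true
  | _, _ => false

/-- The constrained temporal height of a WCTL formula: the maximal number of nested
constrained modalities (modalities whose constraint is not equivalent to `≥ 0`). -/
def cheight {AP : Type} : WCTL AP → ℕ
  | .tt => 0
  | .atom _ => 0
  | .not φ => cheight φ
  | .or φ ψ => max (cheight φ) (cheight ψ)
  | .EU φ cmp c ψ => max (cheight φ) (cheight ψ) + (if isTrivialC cmp c then 0 else 1)
  | .AU φ cmp c ψ => max (cheight φ) (cheight ψ) + (if isTrivialC cmp c then 0 else 1)

lemma mixedMove_cost_nonneg {Q : Type} [Fintype Q] {A : PTA Q} {s s' : Q × ℝ} {c : ℝ}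
    (h : MixedMove A s c s') : 0 ≤ c := by
  obtain ⟨c₁, c₂, m, ⟨t, ht, _, hc₁, _⟩, ⟨e, _, _, _, _, _, _, hc₂⟩, rfl⟩ := h
  have h1 : 0 ≤ c₁ := by rw [hc₁]; positivity
  have h2 : 0 ≤ c₂ := by rw [hc₂]; positivity
  linarith

lemma run_cost_nonneg {Q : Type} [Fintype Q] {A : PTA Q} {s : Q × ℝ}
    (ρ : InfRun A s) (n : ℕ) : 0 ≤ ρ.cst n :=
  mixedMove_cost_nonneg (ρ.step n)

/-- For a one-clock PTA with a single cost function and all discrete costs 0,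
`(q,x) ⊨ AφU_{≤c}ψ` iff `(q,x) ⊨ AφUψ` and `(q,x) ⊨ AF_{≤c}ψ`. -/
theorem stmt8 {Q AP : Type} [Fintype Q] (A : PTA Q) (L : Q → AP → Prop)
    (hnb : NonBlocking A) (hdisc : ∀ e ∈ A.E, e.dcost = 0)
    (φ ψ : WCTL AP) (c : ℕ) (q : Q) (x : ℝ) (hx : 0 ≤ x) :
    WCTLsat A L (.AU φ .le c ψ) (q, x) ↔
      (WCTLsat A L (.AU φ .ge 0 ψ) (q, x) ∧
       WCTLsat A L (.AU .tt .le c ψ) (q, x)) := by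
  simp only [WCTLsat]
  constructor
  · intro h
    constructor
    · intro ρ
      obtain ⟨π, hπ, hψ, hφ, hc⟩ := h ρ
      exact ⟨π, hπ, hψ, hφ, by
        simp only [Cmp.sat] at *
        have : (0:ℝ) ≤ ∑ i ∈ Finset.range π, ρ.cst i :=
          Finset.sum_nonneg fun i _ => run_cost_nonneg ρ i
        simpa using this⟩
    · intro ρ
      obtain ⟨π, hπ, hψ, _, hc⟩ := h ρ
      exact ⟨π, hπ, hψ, fun _ _ _ => trivial, hc⟩
  · rintro ⟨h1, h2⟩ ρ
    obtain ⟨π₁, hπ₁, hψ₁, hφ₁, _⟩ := h1 ρ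
    obtain ⟨π₂, hπ₂, hψ₂, _, hc₂⟩ := h2 ρ
    simp only [Cmp.sat] at hc₂ ⊢
    have hmono : ∑ i ∈ Finset.range (min π₁ π₂), ρ.cst i ≤ ∑ i ∈ Finset.range π₂, ρ.cst i :=
      Finset.sum_le_sum_of_subset_of_nonneg
        (Finset.range_subset_range.2 (min_le_right _ _))
        (fun i _ _ => run_cost_nonneg ρ i)
    refine ⟨min π₁ π₂, lt_min hπ₁ hπ₂, ?_, ?_, le_trans hmono hc₂⟩
    · rcases le_total π₁ π₂ with h | h
      · rwa [min_eq_left h]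
      · rwa [min_eq_right h]
    · intro π' hπ' hlt
      exact hφ₁ π' hπ' (lt_of_lt_of_le hlt (min_le_left _ _))
end

section
/- Consider the one-clock priced timed automaton module Mod (for incrementing a counter) with locations A, B, C, D with cost rates cost(A)=1, cost(B)=1, cost(C)=2, cost(D)=1, invariant x ≤ 1 on B, transitions A→B (guard x ≤ 1, no reset, discrete cost 0), B→C (guard x = 1, reset x:=0, discrete cost 0), C→D (no guard, no reset, discrete cost 2). Suppose there is a run ρ entering the module at A with clock value x = x₀ ≤ 1 and exiting at D with clock value x = x₁, such that no time elapses in A and in D, and the accumulated cost of ρ between A and D equals 3. Then x₁ = x₀/2. -/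
variable {Q : Type} [Fintype Q]

/-! ## Finite runs (sequences of mixed moves) -/

/-- A finite run of `A` with `k` mixed moves: `st i` is the `i`-th state, the `i`-th mixed
move delays for `d i` time units (with the invariant satisfied throughout) and then takes
a discrete move of cost `cc i` to `st (i+1)`. -/
structure FinRun (A : PTA Q) (k : ℕ) where
  st : ℕ → Q × ℝ
  d : ℕ → ℝ
  cc : ℕ → ℝ
  hdel : ∀ i < k, 0 ≤ d i ∧
    ∀ t' : ℝ, 0 ≤ t' → t' ≤ d i → PGuard.sat (A.Inv (st i).1) ((st i).2 + t')
  hdisc : ∀ i < k, DiscMove A ((st i).1, (st i).2 + d i) (cc i) (st (i + 1))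

/-- Cost of the `i`-th mixed move of a finite run. -/
def FinRun.stepCost {A : PTA Q} {k : ℕ} (ρ : FinRun A k) (i : ℕ) : ℝ :=
  ρ.d i * (A.rate (ρ.st i).1 : ℝ) + ρ.cc i

/-- Locations of the increment module. -/
inductive L11
  | A | B | C | D
  deriving DecidableEq

instance : Fintype L11 :=
  ⟨{L11.A, L11.B, L11.C, L11.D}, fun x => by cases x <;> simp⟩

/-- The increment module: rates `A:1, B:1, C:2, D:1`, invariant `x ≤ 1` on `B`,
transitions `A→B (x≤1)`, `B→C (x=1, x:=0)`, `C→D (discrete cost 2)`. -/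
def Mod11 : PTA L11 where
  init := .A
  E := {e | e ∈ [(⟨.A, [(Cmp.le, 1)], false, .B, 0⟩ : PTrans L11),
               ⟨.B, [(Cmp.eq, 1)], true, .C, 0⟩,
               ⟨.C, [], false, .D, 2⟩]}
  finE := List.finite_toSet _
  Inv := fun q => match q with
    | .B => [(Cmp.le, 1)]
    | _ => []
  rate := fun q => match q with
    | .C => 2
    | _ => 1

/-- **Lemma 12.** If a run enters the increment module at `A` with clock
value `x₀ ≤ 1` and exits at `D` with clock value `x₁`, with no time elapsing in `A` and
`D`, and the accumulated cost between `A` and `D` equals `3`, then `x₁ = x₀ / 2`. -/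
theorem stmt11 (x₀ x₁ : ℝ) (hx₀ : 0 ≤ x₀) (hx₁ : x₀ ≤ 1)
    (k : ℕ) (ρ : FinRun Mod11 k)
    (hstart : ρ.st 0 = (L11.A, x₀)) (hend : ρ.st k = (L11.D, x₁))
    (hA : ∀ i < k, (ρ.st i).1 = L11.A → ρ.d i = 0)
    (hD : ∀ i < k, (ρ.st i).1 = L11.D → ρ.d i = 0)
    (hcost : ∑ i ∈ Finset.range k, ρ.stepCost i = 3) :
    x₁ = x₀ / 2 := by
  -- Helper: analyze the i-th discrete move
  classical
  have hk0 : 0 < k := by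
    rcases Nat.eq_zero_or_pos k with h | h
    · exfalso; subst h; rw [hstart] at hend
      exact absurd (congrArg Prod.fst hend) (by simp)
    · exact h
  -- step 0: from A
  obtain ⟨e0, he0, hsrc0, htgt0, hg0, hr0, hinv0, hc0⟩ := ρ.hdisc 0 hk0
  have hd0 : ρ.d 0 = 0 := hA 0 hk0 (by rw [hstart])
  rw [hstart] at hsrc0 hg0 hr0
  simp [Mod11] at he0
  rcases he0 with rfl | rfl | rfl
  rotate_left
  · simp at hsrc0
  · simp at hsrc0
  simp only at htgt0 hr0 hc0
  have hst1 : ρ.st 1 = (L11.B, x₀) := by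
    have := htgt0
    refine Prod.ext this.symm ?_
    rw [hr0]; simp [hd0]
  have hk1 : 1 < k := by
    by_contra h
    have : k = 1 := by omega
    subst this
    rw [hst1] at hend
    exact absurd (congrArg Prod.fst hend) (by simp)
  -- step 1: from B
  obtain ⟨e1, he1, hsrc1, htgt1, hg1, hr1, hinv1, hc1⟩ := ρ.hdisc 1 hk1
  rw [hst1] at hsrc1 hg1 hr1
  simp [Mod11] at he1
  rcases he1 with rfl | rfl | rfl
  · simp at hsrc1
  rotate_left
  · simp at hsrc1
  simp only at htgt1 hr1 hc1
  have hguard1 : x₀ + ρ.d 1 = 1 := by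
    have := hg1 (Cmp.eq, 1) (by simp)
    simpa [Cmp.sat] using this
  have hst2 : ρ.st 2 = (L11.C, 0) := by
    refine Prod.ext htgt1.symm ?_
    rw [hr1]; simp
  have hk2 : 2 < k := by
    by_contra h
    have : k = 2 := by omega
    subst this
    rw [hst2] at hend
    exact absurd (congrArg Prod.fst hend) (by simp)
  -- step 2: from C
  obtain ⟨e2, he2, hsrc2, htgt2, hg2, hr2, hinv2, hc2⟩ := ρ.hdisc 2 hk2
  rw [hst2] at hsrc2 hg2 hr2
  simp [Mod11] at he2
  rcases he2 with rfl | rfl | rfl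
  · simp at hsrc2
  · simp at hsrc2
  simp only at htgt2 hr2 hc2
  have hst3 : ρ.st 3 = (L11.D, ρ.d 2) := by
    refine Prod.ext htgt2.symm ?_
    rw [hr2]; simp
  have hk3 : k = 3 := by
    by_contra h
    have h3 : 3 < k := by omega
    obtain ⟨e3, he3, hsrc3, _, _, _, _, _⟩ := ρ.hdisc 3 h3
    rw [hst3] at hsrc3
    simp [Mod11] at he3
    rcases he3 with rfl | rfl | rfl <;> simp at hsrc3
  -- conclude
  subst hk3
  have hx1 : x₁ = ρ.d 2 := by
    rw [hst3] at hend
    exact (congrArg Prod.snd hend).symm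
  have hsum : ∑ i ∈ Finset.range 3, ρ.stepCost i = 3 := hcost
  rw [Finset.sum_range_succ, Finset.sum_range_succ, Finset.sum_range_one] at hsum
  unfold FinRun.stepCost at hsum
  rw [hstart, hst1, hst2, hc0, hc1, hc2, hd0] at hsum
  simp only [Mod11] at hsum
  push_cast at hsum
  have hd1 : ρ.d 1 = 1 - x₀ := by linarith
  rw [hx1]
  norm_num at hsum
  linarith
end

section
/- Consider the one-clock priced timed automaton module Mod (for testing/decrementing counter c₁) with locations and cost rates A₀(1), B₀(3), C₀(1), A(1), B(3), C(1), C'(1), D(1), E₁(3), E₂(3), F₁(1), F₂(1), G₁(3), G₂(3), H₁(1), H₂(1), A₂(1), B₂(2), C₂(1), D₂(1); transitions (all of discrete cost 0 except C₂→D₂ of discrete cost 1): A₀→B₀ (x<1), B₀→C₀ (x=1, x:=0), C₀→C, C→D, D→A (x<1), A→B, B→C (x=1, x:=0), C→C', C'→C, D→E₁ (x=1, x:=0), D→E₂ (x>1, x:=0), E₁→F₁, E₂→F₂, F₁→G₁ (x:=0), F₂→G₂ (x:=0), G₁→H₁, G₂→H₂, H₂→A₂, A₂→B₂, B₂→C₂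 (x=1, x:=0), C₂→D₂, plus an exit from A₀ (x=1) and from H₁ to module Mod_j, and an exit from D₂ to module Mod_k. Suppose there is a run ρ entering Mod at A₀ with clock value x = x₀ ≤ 1 and exiting towards Mod_j with clock value x = x₁, such that: (i) no time elapses in A₀, C₀, D, A, C', F₁ and H₁; (ii) every visit to C₀ or C' is eventually strictly followed by a visit to C' or F₁; (iii) the accumulated cost of ρ equals exactly 3 along each portion between A or A₀ and the next visit to D, along each portion between C₀ or C' and the next visit to C' or F₁, and along the portion between the last visit to D and H₁. Then x₁ = x₀ and there exists n ∈ ℕ such that x₀ = 3^(−n). -/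
variable {Q : Type} [Fintype Q]

/-- Locations of the test/decrement module (for counter `c₁`), plus the entry points
`ExitJ` of module `Mod_j` and `ExitK` of module `Mod_k`. -/
inductive L12
  | A0 | B0 | C0 | A | B | C | C' | D | E1 | E2 | F1 | F2 | G1 | G2 | H1 | H2
  | A2 | B2 | C2 | D2 | ExitJ | ExitK
  deriving DecidableEq

instance : Fintype L12 :=
  Fintype.ofList [.A0, .B0, .C0, .A, .B, .C, .C', .D, .E1, .E2, .F1, .F2, .G1, .G2, .H1, .H2,
    .A2, .B2, .C2, .D2, .ExitJ, .ExitK] (by intro x; cases x <;> simp)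

/-- Transitions of the test/decrement module (all of discrete cost 0 except `C₂→D₂`,
of discrete cost 1), including the exits towards `Mod_j` (from `A₀` on `x=1` and from
`H₁`) and towards `Mod_k` (from `D₂`). -/
def trans12 : List (PTrans L12) :=
  [⟨.A0, [(Cmp.lt, 1)], false, .B0, 0⟩,
   ⟨.B0, [(Cmp.eq, 1)], true, .C0, 0⟩,
   ⟨.C0, [], false, .C, 0⟩,
   ⟨.C, [], false, .D, 0⟩,
   ⟨.D, [(Cmp.lt, 1)], false, .A, 0⟩,
   ⟨.A, [], false, .B, 0⟩,
   ⟨.B, [(Cmp.eq, 1)], true, .C, 0⟩,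
   ⟨.C, [], false, .C', 0⟩,
   ⟨.C', [], false, .C, 0⟩,
   ⟨.D, [(Cmp.eq, 1)], true, .E1, 0⟩,
   ⟨.D, [(Cmp.gt, 1)], true, .E2, 0⟩,
   ⟨.E1, [], false, .F1, 0⟩,
   ⟨.E2, [], false, .F2, 0⟩,
   ⟨.F1, [], true, .G1, 0⟩,
   ⟨.F2, [], true, .G2, 0⟩,
   ⟨.G1, [], false, .H1, 0⟩,
   ⟨.G2, [], false, .H2, 0⟩,
   ⟨.H2, [], false, .A2, 0⟩,
   ⟨.A2, [], false, .B2, 0⟩,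
   ⟨.B2, [(Cmp.eq, 1)], true, .C2, 0⟩,
   ⟨.C2, [], false, .D2, 1⟩,
   ⟨.A0, [(Cmp.eq, 1)], false, .ExitJ, 0⟩,
   ⟨.H1, [], false, .ExitJ, 0⟩,
   ⟨.D2, [], false, .ExitK, 0⟩]

/-- The test/decrement module, with cost rates
`A₀,C₀,A,C,C',D,F₁,F₂,H₁,H₂,A₂,C₂,D₂ : 1`, `B₀,B,E₁,E₂,G₁,G₂ : 3`, `B₂ : 2`. -/
def Mod12 : PTA L12 where
  init := .A0
  E := {e | e ∈ trans12}
  finE := List.finite_toSet _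
  Inv := fun _ => []
  rate := fun q => match q with
    | .B0 | .B | .E1 | .E2 | .G1 | .G2 => 3
    | .B2 => 2
    | _ => 1

/-- Successor characterization for the module `Mod12`. -/
def Step : L12 → ℝ → L12 × ℝ → ℝ → Prop
  | .A0, v, s, c => ((v < 1 ∧ s = (.B0, v)) ∨ (v = 1 ∧ s = (.ExitJ, v))) ∧ c = 0
  | .B0, v, s, c => v = 1 ∧ s = (.C0, 0) ∧ c = 0
  | .C0, v, s, c => s = (.C, v) ∧ c = 0
  | .C, v, s, c => (s = (.D, v) ∨ s = (.C', v)) ∧ c = 0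
  | .C', v, s, c => s = (.C, v) ∧ c = 0
  | .A, v, s, c => s = (.B, v) ∧ c = 0
  | .B, v, s, c => v = 1 ∧ s = (.C, 0) ∧ c = 0
  | .D, v, s, c => ((v < 1 ∧ s = (.A, v)) ∨ (v = 1 ∧ s = (.E1, 0)) ∨ (1 < v ∧ s = (.E2, 0))) ∧ c = 0
  | .E1, v, s, c => s = (.F1, v) ∧ c = 0
  | .E2, v, s, c => s = (.F2, v) ∧ c = 0
  | .F1, _, s, c => s = (.G1, 0) ∧ c = 0
  | .F2, _, s, c => s = (.G2, 0) ∧ c = 0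
  | .G1, v, s, c => s = (.H1, v) ∧ c = 0
  | .G2, v, s, c => s = (.H2, v) ∧ c = 0
  | .H1, v, s, c => s = (.ExitJ, v) ∧ c = 0
  | .H2, v, s, c => s = (.A2, v) ∧ c = 0
  | .A2, v, s, c => s = (.B2, v) ∧ c = 0
  | .B2, v, s, c => v = 1 ∧ s = (.C2, 0) ∧ c = 0
  | .C2, v, s, c => s = (.D2, v) ∧ c = 1
  | .D2, v, s, c => s = (.ExitK, v) ∧ c = 0
  | .ExitJ, _, _, _ => False
  | .ExitK, _, _, _ => False

lemma master {k : ℕ} (ρ : FinRun Mod12 k) (i : ℕ) (hik : i < k) :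
    Step (ρ.st i).1 ((ρ.st i).2 + ρ.d i) (ρ.st (i+1)) (ρ.cc i) := by
  obtain ⟨e, he, hsrc, htgt, hg, hval, hinv, hc⟩ := ρ.hdisc i hik
  have he' : e ∈ trans12 := he
  fin_cases he' <;>
    simp only at hsrc htgt hg hval hc <;>
    rw [← hsrc] <;>
    simp_all [Step, PGuard.sat, Cmp.sat, Prod.ext_iff]

/-- **Lemma 13.** Suppose a run `ρ` enters the test/decrement module at
`A₀` with clock value `x₀ ≤ 1` and exits towards `Mod_j` with clock value `x₁`, such that:
(i) no time elapses in `A₀, C₀, D, A, C', F₁, H₁`; (ii) every visit to `C₀` or `C'` is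
eventually strictly followed by a visit to `C'` or `F₁`; (iii) the accumulated cost equals
exactly `3` along each portion of `ρ` between `A` or `A₀` and the next visit to `D`, along
each portion between `C₀` or `C'` and the next visit to `C'` or `F₁`, and along the portion
between the last visit to `D` and `H₁`. Then `x₁ = x₀` and `x₀ = 3^(-n)` for some `n ∈ ℕ`. -/
theorem stmt12 (x₀ x₁ : ℝ) (hx₀ : 0 ≤ x₀) (hx₁ : x₀ ≤ 1)
    (k : ℕ) (ρ : FinRun Mod12 k)
    (hstart : ρ.st 0 = (L12.A0, x₀)) (hend : ρ.st k = (L12.ExitJ, x₁))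
    (hnotime : ∀ i < k,
      (ρ.st i).1 ∈ ([L12.A0, L12.C0, L12.D, L12.A, L12.C', L12.F1, L12.H1] : List L12) →
      ρ.d i = 0)
    (hfollow : ∀ i ≤ k, ((ρ.st i).1 = L12.C0 ∨ (ρ.st i).1 = L12.C') →
      ∃ j, i < j ∧ j ≤ k ∧ ((ρ.st j).1 = L12.C' ∨ (ρ.st j).1 = L12.F1))
    (hcost₁ : ∀ i j : ℕ, i < j → j ≤ k →
      ((ρ.st i).1 = L12.A ∨ (ρ.st i).1 = L12.A0) → (ρ.st j).1 = L12.D →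
      (∀ m, i < m → m < j → (ρ.st m).1 ≠ L12.D) →
      ∑ m ∈ Finset.Ico i j, ρ.stepCost m = 3)
    (hcost₂ : ∀ i j : ℕ, i < j → j ≤ k →
      ((ρ.st i).1 = L12.C0 ∨ (ρ.st i).1 = L12.C') →
      ((ρ.st j).1 = L12.C' ∨ (ρ.st j).1 = L12.F1) →
      (∀ m, i < m → m < j → ¬((ρ.st m).1 = L12.C' ∨ (ρ.st m).1 = L12.F1)) →
      ∑ m ∈ Finset.Ico i j, ρ.stepCost m = 3)
    (hcost₃ : ∀ i j : ℕ, i < j → j ≤ k →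
      (ρ.st i).1 = L12.D → (∀ m, i < m → m ≤ k → (ρ.st m).1 ≠ L12.D) →
      (ρ.st j).1 = L12.H1 →
      ∑ m ∈ Finset.Ico i j, ρ.stepCost m = 3) :
    x₁ = x₀ ∧ ∃ n : ℕ, x₀ = 1 / 3 ^ n := by
  classical
  have hltk : ∀ (m : ℕ) (q : L12) (v' : ℝ), m ≤ k → ρ.st m = (q, v') → q ≠ L12.ExitJ →
      m < k := by
    intro m q v' hm h hne
    rcases lt_or_eq_of_le hm with h' | h'
    · exact h'
    · exfalso
      rw [h', hend] at h
      have h2 := congrArg Prod.fst h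
      simp only at h2
      exact hne h2.symm
  have MS : ∀ (i : ℕ) (q : L12) (v : ℝ), i < k → ρ.st i = (q, v) →
      Step q (v + ρ.d i) (ρ.st (i+1)) (ρ.cc i) := by
    intro i q v h hst
    have h2 := master ρ i h
    rw [hst] at h2
    exact h2
  have hdnn : ∀ i, i < k → 0 ≤ ρ.d i := fun i h => (ρ.hdel i h).1
  have hnt : ∀ (i : ℕ) (q : L12) (v : ℝ), i < k → ρ.st i = (q, v) →
      q ∈ [L12.A0, L12.C0, L12.D, L12.A, L12.C', L12.F1, L12.H1] → ρ.d i = 0 := by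
    intro i q v h hst hm
    exact hnotime i h (by rw [hst]; exact hm)
  have sc : ∀ (i : ℕ) (q : L12) (v : ℝ), ρ.st i = (q, v) →
      ρ.stepCost i = ρ.d i * (Mod12.rate q : ℝ) + ρ.cc i := by
    intro i q v h
    unfold FinRun.stepCost
    rw [h]
  have rC : Mod12.rate L12.C = 1 := rfl
  have rB : Mod12.rate L12.B = 3 := rfl
  have rE1 : Mod12.rate L12.E1 = 3 := rfl
  have rG1 : Mod12.rate L12.G1 = 3 := rfl
  have rB0 : Mod12.rate L12.B0 = 3 := rfl
  have csplit : ∀ a b c : ℕ, a ≤ b → b ≤ c →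
      (∑ m ∈ Finset.Ico a c, ρ.stepCost m) =
        (∑ m ∈ Finset.Ico a b, ρ.stepCost m) + ∑ m ∈ Finset.Ico b c, ρ.stepCost m :=
    fun a b c h1 h2 => (Finset.sum_Ico_consecutive _ h1 h2).symm
  have csum1 : ∀ j : ℕ, (∑ m ∈ Finset.Ico j (j+1), ρ.stepCost m) = ρ.stepCost j := by
    intro j; simp
  have csum2 : ∀ j : ℕ, (∑ m ∈ Finset.Ico j (j+2), ρ.stepCost m) =
      ρ.stepCost j + ρ.stepCost (j+1) := by
    intro j
    rw [Finset.sum_Ico_eq_sum_range]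
    simp [Finset.sum_range_succ]
  have csum4 : ∀ j : ℕ, (∑ m ∈ Finset.Ico j (j+4), ρ.stepCost m) =
      ρ.stepCost j + ρ.stepCost (j+1) + ρ.stepCost (j+2) + ρ.stepCost (j+3) := by
    intro j
    rw [Finset.sum_Ico_eq_sum_range]
    simp [Finset.sum_range_succ]
  -- the forced tail after a visit to F1
  have F1E : ∀ (m : ℕ) (vm : ℝ), m ≤ k → ρ.st m = (L12.F1, vm) →
      ∃ w : ℝ, k = m + 3 ∧ 0 ≤ w ∧ ρ.st k = (L12.ExitJ, w) ∧
        ρ.st (m+1) = (L12.G1, 0) ∧ ρ.st (m+2) = (L12.H1, w) ∧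
        ρ.stepCost m = 0 ∧ ρ.stepCost (m+1) = 3*w ∧ ρ.stepCost (m+2) = 0 := by
    intro m vm hm hst
    have h1 : m < k := hltk m _ _ hm hst (by decide)
    have hdm : ρ.d m = 0 := hnt m _ _ h1 hst (by decide)
    have s1 := MS m _ _ h1 hst
    simp only [Step] at s1
    obtain ⟨hst1, hcc1⟩ := s1
    have h2 : m+1 < k := hltk (m+1) _ _ (by omega) hst1 (by decide)
    have s2 := MS (m+1) _ _ h2 hst1
    simp only [Step] at s2
    obtain ⟨hst2r, hcc2⟩ := s2
    rw [zero_add] at hst2r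
    have hst2 : ρ.st (m+2) = (L12.H1, ρ.d (m+1)) := hst2r
    have h3 : m+2 < k := hltk (m+2) _ _ (by omega) hst2 (by decide)
    have hdm2 : ρ.d (m+2) = 0 := hnt (m+2) _ _ h3 hst2 (by decide)
    have s3 := MS (m+2) _ _ h3 hst2
    simp only [Step] at s3
    obtain ⟨hst3r, hcc3⟩ := s3
    rw [hdm2, add_zero] at hst3r
    have hst3 : ρ.st (m+3) = (L12.ExitJ, ρ.d (m+1)) := hst3r
    have hk : k = m + 3 := by
      by_contra hne
      have h4 : m + 3 < k := by omega
      have s4 := MS (m+3) _ _ h4 hst3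
      simp only [Step] at s4
    refine ⟨ρ.d (m+1), hk, hdnn _ h2, ?_, hst1, hst2, ?_, ?_, ?_⟩
    · rw [← hk] at hst3
      exact hst3
    · rw [sc m _ _ hst, hdm, hcc1]; norm_num
    · rw [sc (m+1) _ _ hst1, hcc2, rG1]; push_cast; ring
    · rw [sc (m+2) _ _ hst2, hdm2, hcc3]; norm_num

  -- main induction over the A/B/C/D loop
  have LOOP : ∀ n i a : ℕ, ∀ v ya : ℝ, k - i = n → i ≤ k →
      ρ.st i = (L12.C, v) → a < i →
      ((ρ.st a).1 = L12.A ∨ (ρ.st a).1 = L12.A0) →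
      ((∑ m ∈ Finset.Ico a i, ρ.stepCost m) = 3*(1 - ya) + v) →
      (∀ m, a < m → m < i → (ρ.st m).1 ≠ L12.D) →
      ∃ (N jF : ℕ) (u w : ℝ), 1 ≤ N ∧ i < jF ∧ k = jF + 3 ∧
        (ρ.st jF).1 = L12.F1 ∧ ρ.st k = (L12.ExitJ, w) ∧ 0 ≤ u ∧ 0 ≤ w ∧ u + w = 1 ∧
        3^N * ya = 1 ∧
        (∑ m ∈ Finset.Ico i jF, ρ.stepCost m) = 3*(N:ℝ) + 3*u + 3*ya - v - 3 := by
    intro n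
    induction n using Nat.strong_induction_on with
    | _ n IH =>
      intro i a v ya hn hik hsti ha hloca hcosta hnoD
      have hik' : i < k := hltk i _ _ hik hsti (by decide)
      have si := MS i _ _ hik' hsti
      simp only [Step] at si
      obtain ⟨si, hcci⟩ := si
      have hdi := hdnn i hik'
      have sci : ρ.stepCost i = ρ.d i := by
        rw [sc i _ _ hsti, hcci, rC]; push_cast; ring
      rcases si with hstDr | hstC'r
      · -- C → D
        have hstD : ρ.st (i+1) = (L12.D, v + ρ.d i) := hstDr
        have hiD : i+1 < k := hltk (i+1) _ _ (by omega) hstD (by decide)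
        have hdiD : ρ.d (i+1) = 0 := hnt (i+1) _ _ hiD hstD (by decide)
        have sD := MS (i+1) _ _ hiD hstD
        simp only [Step] at sD
        obtain ⟨sD, hccD⟩ := sD
        rw [hdiD, add_zero] at sD
        have sciD : ρ.stepCost (i+1) = 0 := by
          rw [sc (i+1) _ _ hstD, hdiD, hccD]; norm_num
        have hAD : (∑ m ∈ Finset.Ico a (i+1), ρ.stepCost m) = 3 := by
          apply hcost₁ a (i+1) (by omega) (by omega) hloca (by rw [hstD])
          intro m h1 h2
          rcases Nat.lt_or_ge m i with hm | hm
          · exact hnoD m h1 hm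
          · have hmi : m = i := by omega
            rw [hmi, hsti]; simp
        have hval1 : (∑ m ∈ Finset.Ico a (i+1), ρ.stepCost m) = 3*(1-ya) + (v + ρ.d i) := by
          rw [csplit a i (i+1) (by omega) (by omega), csum1, hcosta, sci]; ring
        have hy : v + ρ.d i = 3*ya := by
          rw [hval1] at hAD; linarith
        rcases sD with ⟨hlt1, hstAr⟩ | ⟨heq1, hstEr⟩ | ⟨hgt1, hstE2r⟩
        · -- D → A : recurse
          have hstA : ρ.st (i+2) = (L12.A, v + ρ.d i) := hstAr
          have hiA : i+2 < k := hltk (i+2) _ _ (by omega) hstA (by decide)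
          have hdA : ρ.d (i+2) = 0 := hnt (i+2) _ _ hiA hstA (by decide)
          have sA := MS (i+2) _ _ hiA hstA
          simp only [Step] at sA
          obtain ⟨hstBr, hccA⟩ := sA
          rw [hdA, add_zero] at hstBr
          have hstB : ρ.st (i+3) = (L12.B, v + ρ.d i) := hstBr
          have hiB : i+3 < k := hltk (i+3) _ _ (by omega) hstB (by decide)
          have sB := MS (i+3) _ _ hiB hstB
          simp only [Step] at sB
          obtain ⟨hgB, hstC2r, hccB⟩ := sB
          have hstC2 : ρ.st (i+4) = (L12.C, 0) := hstC2r
          have scA : ρ.stepCost (i+2) = 0 := by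
            rw [sc (i+2) _ _ hstA, hdA, hccA]; norm_num
          have hd3 : ρ.d (i+3) = 1 - (v + ρ.d i) := by linarith
          have scB : ρ.stepCost (i+3) = 3*(1 - (v + ρ.d i)) := by
            rw [sc (i+3) _ _ hstB, hccB, rB, hd3]; push_cast; ring
          have hcostA : (∑ m ∈ Finset.Ico (i+2) (i+4), ρ.stepCost m)
              = 3*(1 - (v + ρ.d i)) + 0 := by
            rw [csum2, show i+2+1 = i+3 by omega, scA, scB]; ring
          obtain ⟨N, jF, u, w, hN1, hjF, hkj, hF1, hstk, hu, hw, huw, hpow, hsum⟩ :=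
            IH (k - (i+4)) (by omega) (i+4) (i+2) 0 (v + ρ.d i) rfl (by omega) hstC2 (by omega)
              (Or.inl (by rw [hstA]))
              hcostA
              (by intro m h1 h2
                  have hmi : m = i+3 := by omega
                  rw [hmi, hstB]; simp)
          refine ⟨N+1, jF, u, w, by omega, by omega, hkj, hF1, hstk, hu, hw, huw, ?_, ?_⟩
          · rw [pow_succ, mul_assoc, ← hy]
            exact hpow
          · rw [csplit i (i+4) jF (by omega) (by omega), csum4, sci, sciD, scA, scB, hsum]
            push_cast
            linarith [hy]
        · -- D → E1 : last loop
          have hstE : ρ.st (i+2) = (L12.E1, 0) := hstEr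
          have hiE : i+2 < k := hltk (i+2) _ _ (by omega) hstE (by decide)
          have sE := MS (i+2) _ _ hiE hstE
          simp only [Step] at sE
          obtain ⟨hstFr, hccE⟩ := sE
          rw [zero_add] at hstFr
          have hstF : ρ.st (i+3) = (L12.F1, ρ.d (i+2)) := hstFr
          obtain ⟨w, hk3, hw0, hstk, hstG, hstH, scF, scG, scH⟩ :=
            F1E (i+3) _ (by omega) hstF
          have hstG' : ρ.st (i+4) = (L12.G1, 0) := hstG
          have hstH' : ρ.st (i+5) = (L12.H1, w) := hstH
          have scG' : ρ.stepCost (i+4) = 3*w := scG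
          have scE : ρ.stepCost (i+2) = 3 * ρ.d (i+2) := by
            rw [sc (i+2) _ _ hstE, hccE, rE1]; push_cast; ring
          have hc3 : (∑ m ∈ Finset.Ico (i+1) (i+5), ρ.stepCost m) = 3 := by
            apply hcost₃ (i+1) (i+5) (by omega) (by omega) (by rw [hstD]) ?_ (by rw [hstH'])
            intro m h1 h2
            have hm5 : m = i+2 ∨ m = i+3 ∨ m = i+4 ∨ m = i+5 ∨ m = i+6 := by omega
            rcases hm5 with rfl | rfl | rfl | rfl | rfl
            · rw [hstE]; simp
            · rw [hstF]; simp
            · rw [hstG']; simp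
            · rw [hstH']; simp
            · have hik6 : i+6 = k := by omega
              rw [hik6, hend]; simp
          have sum15 : (∑ m ∈ Finset.Ico (i+1) (i+5), ρ.stepCost m)
              = 3*ρ.d (i+2) + 3*w := by
            rw [show i+5 = i+1+4 by omega, csum4 (i+1),
              show i+1+1 = i+2 by omega, show i+1+2 = i+3 by omega,
              show i+1+3 = i+4 by omega, sciD, scE, scF, scG']
            ring
          have huw : ρ.d (i+2) + w = 1 := by
            rw [sum15] at hc3; linarith
          refine ⟨1, i+3, ρ.d (i+2), w, le_refl 1, by omega, by omega, by rw [hstF],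
            hstk, hdnn _ hiE, hw0, huw, ?_, ?_⟩
          · rw [pow_one]; linarith [hy, heq1]
          · rw [csplit i (i+2) (i+3) (by omega) (by omega), csum2 i,
              show i+3 = i+2+1 by omega, csum1 (i+2), sci, sciD, scE]
            push_cast
            linarith [hy, heq1]
        · -- D → E2 : impossible
          have hstE2 : ρ.st (i+2) = (L12.E2, 0) := hstE2r
          have h2 : i+2 < k := hltk (i+2) _ _ (by omega) hstE2 (by decide)
          have s2 := MS (i+2) _ _ h2 hstE2
          simp only [Step] at s2
          obtain ⟨hst3, -⟩ := s2
          have hst3' : ρ.st (i+3) = (L12.F2, 0 + ρ.d (i+2)) := hst3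
          have h3 : i+3 < k := hltk (i+3) _ _ (by omega) hst3' (by decide)
          have s3 := MS (i+3) _ _ h3 hst3'
          simp only [Step] at s3
          obtain ⟨hst4, -⟩ := s3
          have hst4' : ρ.st (i+4) = (L12.G2, 0) := hst4
          have h4 : i+4 < k := hltk (i+4) _ _ (by omega) hst4' (by decide)
          have s4 := MS (i+4) _ _ h4 hst4'
          simp only [Step] at s4
          obtain ⟨hst5, -⟩ := s4
          have hst5' : ρ.st (i+5) = (L12.H2, 0 + ρ.d (i+4)) := hst5
          have h5 : i+5 < k := hltk (i+5) _ _ (by omega) hst5' (by decide)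
          have s5 := MS (i+5) _ _ h5 hst5'
          simp only [Step] at s5
          obtain ⟨hst6, -⟩ := s5
          have hst6' : ρ.st (i+6) = (L12.A2, 0 + ρ.d (i+4) + ρ.d (i+5)) := hst6
          have h6 : i+6 < k := hltk (i+6) _ _ (by omega) hst6' (by decide)
          have s6 := MS (i+6) _ _ h6 hst6'
          simp only [Step] at s6
          obtain ⟨hst7, -⟩ := s6
          have hst7' : ρ.st (i+7) = (L12.B2, 0 + ρ.d (i+4) + ρ.d (i+5) + ρ.d (i+6)) := hst7
          have h7 : i+7 < k := hltk (i+7) _ _ (by omega) hst7' (by decide)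
          have s7 := MS (i+7) _ _ h7 hst7'
          simp only [Step] at s7
          obtain ⟨-, hst8, -⟩ := s7
          have hst8' : ρ.st (i+8) = (L12.C2, 0) := hst8
          have h8 : i+8 < k := hltk (i+8) _ _ (by omega) hst8' (by decide)
          have s8 := MS (i+8) _ _ h8 hst8'
          simp only [Step] at s8
          obtain ⟨hst9, -⟩ := s8
          have hst9' : ρ.st (i+9) = (L12.D2, 0 + ρ.d (i+8)) := hst9
          have h9 : i+9 < k := hltk (i+9) _ _ (by omega) hst9' (by decide)
          have s9 := MS (i+9) _ _ h9 hst9'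
          simp only [Step] at s9
          obtain ⟨hst10, -⟩ := s9
          have hst10' : ρ.st (i+10) = (L12.ExitK, 0 + ρ.d (i+8) + ρ.d (i+9)) := hst10
          have h10 : i+10 < k := hltk (i+10) _ _ (by omega) hst10' (by decide)
          have s10 := MS (i+10) _ _ h10 hst10'
          simp only [Step] at s10
      · -- C → C' : recurse with same anchor
        have hstC' : ρ.st (i+1) = (L12.C', v + ρ.d i) := hstC'r
        have hiC' : i+1 < k := hltk (i+1) _ _ (by omega) hstC' (by decide)
        have hdC' : ρ.d (i+1) = 0 := hnt (i+1) _ _ hiC' hstC' (by decide)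
        have sC' := MS (i+1) _ _ hiC' hstC'
        simp only [Step] at sC'
        obtain ⟨hstC2r, hccC'⟩ := sC'
        rw [hdC', add_zero] at hstC2r
        have hstC2 : ρ.st (i+2) = (L12.C, v + ρ.d i) := hstC2r
        have scC' : ρ.stepCost (i+1) = 0 := by
          rw [sc (i+1) _ _ hstC', hdC', hccC']; norm_num
        have hcost' : (∑ m ∈ Finset.Ico a (i+2), ρ.stepCost m)
            = 3*(1-ya) + (v + ρ.d i) := by
          rw [csplit a i (i+2) (by omega) (by omega), csum2 i, sci, scC', hcosta]
          ring
        obtain ⟨N, jF, u, w, hN1, hjF, hkj, hF1, hstk, hu, hw, huw, hpow, hsum⟩ :=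
          IH (k-(i+2)) (by omega) (i+2) a (v + ρ.d i) ya rfl (by omega) hstC2 (by omega)
            hloca hcost'
            (by intro m h1 h2
                rcases Nat.lt_or_ge m i with hm | hm
                · exact hnoD m h1 hm
                · rcases (by omega : m = i ∨ m = i+1) with rfl | rfl
                  · rw [hsti]; simp
                  · rw [hstC']; simp)
        refine ⟨N, jF, u, w, hN1, by omega, hkj, hF1, hstk, hu, hw, huw, hpow, ?_⟩
        rw [csplit i (i+2) jF (by omega) (by omega), csum2 i, sci, scC', hsum]
        ring

  -- counting the C0/C' → C'/F1 segments
  have SEG : ∀ n a : ℕ, k - a = n → a ≤ k →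
      ((ρ.st a).1 = L12.C0 ∨ (ρ.st a).1 = L12.C') →
      ∃ (M jF : ℕ), 1 ≤ M ∧ a < jF ∧ jF ≤ k ∧ (ρ.st jF).1 = L12.F1 ∧
        (∑ m ∈ Finset.Ico a jF, ρ.stepCost m) = 3*(M:ℝ) := by
    intro n
    induction n using Nat.strong_induction_on with
    | _ n IH =>
      intro a hn hak hloc
      obtain ⟨j0, hj0a, hj0k, hj0loc⟩ := hfollow a hak hloc
      have hex : ∃ j, a < j ∧ j ≤ k ∧ ((ρ.st j).1 = L12.C' ∨ (ρ.st j).1 = L12.F1) :=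
        ⟨j0, hj0a, hj0k, hj0loc⟩
      obtain ⟨hba, hbk, hbloc⟩ := Nat.find_spec hex
      have hmin : ∀ m, a < m → m < Nat.find hex →
          ¬((ρ.st m).1 = L12.C' ∨ (ρ.st m).1 = L12.F1) := by
        intro m h1 h2 hcon
        exact Nat.find_min hex h2 ⟨h1, by omega, hcon⟩
      have hc2 := hcost₂ a (Nat.find hex) hba hbk hloc hbloc hmin
      rcases hbloc with hbC' | hbF1
      · obtain ⟨M, jF, hM, hbjF, hjFk, hjFloc, hsum⟩ :=
          IH (k - Nat.find hex) (by omega) (Nat.find hex) rfl hbk (Or.inr hbC')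
        refine ⟨M+1, jF, by omega, by omega, hjFk, hjFloc, ?_⟩
        rw [csplit a (Nat.find hex) jF (by omega) (by omega), hc2, hsum]
        push_cast
        ring
      · refine ⟨1, Nat.find hex, le_refl 1, hba, hbk, hbF1, by rw [hc2]; norm_num⟩
  -- initial steps
  have h0k : 0 < k := hltk 0 _ _ (Nat.zero_le k) hstart (by decide)
  have hd0 : ρ.d 0 = 0 := hnt 0 _ _ h0k hstart (by decide)
  have s0 := MS 0 _ _ h0k hstart
  simp only [Step] at s0
  obtain ⟨s0, hcc0⟩ := s0
  rw [hd0, add_zero] at s0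
  rcases s0 with ⟨hxlt, hst1⟩ | ⟨hxeq, hst1⟩
  · -- x₀ < 1 : enter the module
    have h1k : 1 < k := hltk 1 _ _ h0k hst1 (by decide)
    have s1 := MS 1 _ _ h1k hst1
    simp only [Step] at s1
    obtain ⟨hB0g, hst2r, hcc1⟩ := s1
    have hst2 : ρ.st 2 = (L12.C0, 0) := hst2r
    have h2k : 2 < k := hltk 2 _ _ (by omega) hst2 (by decide)
    have hd2 : ρ.d 2 = 0 := hnt 2 _ _ h2k hst2 (by decide)
    have s2 := MS 2 _ _ h2k hst2
    simp only [Step] at s2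
    obtain ⟨hst3r, hcc2⟩ := s2
    rw [hd2, add_zero] at hst3r
    have hst3 : ρ.st 3 = (L12.C, 0) := hst3r
    have h3k : 3 < k := hltk 3 _ _ (by omega) hst3 (by decide)
    have c0 : ρ.stepCost 0 = 0 := by
      rw [sc 0 _ _ hstart, hd0, hcc0]; norm_num
    have c1 : ρ.stepCost 1 = 3*(1 - x₀) := by
      have hd1 : ρ.d 1 = 1 - x₀ := by linarith
      rw [sc 1 _ _ hst1, hcc1, rB0, hd1]; push_cast; ring
    have c2 : ρ.stepCost 2 = 0 := by
      rw [sc 2 _ _ hst2, hd2, hcc2]; norm_num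
    have hcost03 : (∑ m ∈ Finset.Ico 0 3, ρ.stepCost m) = 3*(1 - x₀) + 0 := by
      have e : (∑ m ∈ Finset.Ico 0 3, ρ.stepCost m)
          = ρ.stepCost 0 + ρ.stepCost 1 + ρ.stepCost 2 := by
        rw [← Finset.range_eq_Ico, Finset.sum_range_succ, Finset.sum_range_succ,
          Finset.sum_range_one]
      rw [e, c0, c1, c2]; ring
    obtain ⟨N, jF, u, w, hN1, hjF3, hkjF, hjFF1, hstk, hu0, hw0, huw, hpow, hsum⟩ :=
      LOOP (k-3) 3 0 0 x₀ rfl (by omega) hst3 (by omega) (Or.inr (by rw [hstart]))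
        hcost03
        (by intro m h1 h2
            rcases (by omega : m = 1 ∨ m = 2) with rfl | rfl
            · rw [hst1]; simp
            · rw [hst2]; simp)
    obtain ⟨M, jF', hM1, h2jF', hjF'k, hjF'F1, hsum2⟩ :=
      SEG (k-2) 2 rfl (by omega) (Or.inl (by rw [hst2]))
    obtain ⟨w', hk3', _, _, _, _, _, _, _⟩ :=
      F1E jF' _ hjF'k (by rw [← hjF'F1])
    have hjFeq : jF' = jF := by omega
    rw [hjFeq] at hsum2 h2jF'
    have e23 : (∑ m ∈ Finset.Ico 2 jF, ρ.stepCost m)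
        = ρ.stepCost 2 + ∑ m ∈ Finset.Ico 3 jF, ρ.stepCost m := by
      rw [csplit 2 3 jF (by omega) (by omega), show (3:ℕ) = 2+1 by omega, csum1 2]
    have key : 3*(M:ℝ) = 3*(N:ℝ) + 3*u + 3*x₀ - 3 := by
      rw [← hsum2, e23, c2, hsum]; ring
    -- arithmetic
    have h3Npos : (0:ℝ) < 3^N := by positivity
    have hx0pos : 0 < x₀ := by nlinarith [hpow]
    have hx0eq : x₀ = 1/3^N := by
      rw [eq_div_iff (ne_of_gt h3Npos)]; linarith [hpow]
    have h3N3 : (3:ℝ) ≤ 3^N := by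
      calc (3:ℝ) = 3^1 := by norm_num
      _ ≤ 3^N := by
        apply pow_le_pow_right₀ (by norm_num) hN1
    have hx0le : x₀ ≤ 1/3 := by
      rw [hx0eq]
      apply one_div_le_one_div_of_le (by norm_num) h3N3
    have hu1 : u ≤ 1 := by linarith
    have hNM1 : (N:ℝ) < (M:ℝ) + 1 := by linarith
    have hMN1 : (M:ℝ) < (N:ℝ) + 1 := by linarith
    have hMN : M = N := by
      have a1 : N < M + 1 := by exact_mod_cast hNM1
      have a2 : M < N + 1 := by exact_mod_cast hMN1
      omega
    have hueq : u = 1 - x₀ := by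
      rw [hMN] at key; linarith
    have hweq : w = x₀ := by linarith
    have hx1w : x₁ = w := by
      rw [hend] at hstk
      have := congrArg Prod.snd hstk
      simpa using this
    exact ⟨by rw [hx1w, hweq], N, hx0eq⟩
  · -- x₀ = 1 : exit immediately
    have h1lek : 1 ≤ k := h0k
    have hk1 : k = 1 := by
      by_contra hne
      have h1k : 1 < k := by omega
      have s1 := MS 1 _ _ h1k hst1
      simp only [Step] at s1
    have hst1a : ρ.st 1 = (L12.ExitJ, x₀) := hst1
    have hst1' : ρ.st k = (L12.ExitJ, x₀) := by
      rw [← hk1] at hst1a; exact hst1a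
    rw [hend] at hst1'
    have hx1x0 : x₁ = x₀ := by
      have := congrArg Prod.snd hst1'
      simpa using this
    exact ⟨hx1x0, 0, by rw [hxeq]; norm_num⟩
end

section
/- Consider the one-clock priced timed automaton of Figure 9 of the paper: locations a (rate 1), ℓ₁ (rate 2), ℓ₂ (rate 4), ℓ₁' (rate 1), ℓ₂' (rate 2), b (rate 1), c (rate 1); transitions (all of discrete cost 0): a→ℓ₁ (x<1), a→ℓ₂ (x≥1), ℓ₁→ℓ₁' (x=2, x:=0), ℓ₂→ℓ₂' (x=2, x:=0), ℓ₁'→b (x<2), ℓ₂'→b (x<2), b→c (x=0), b→a. Let x₀ ∈ (0,2). Then every run from (a,x₀) that leaves a with no delay and reaches b with accumulated cost (from leaving a to arriving in b) exactly equal to 4 arrives in b with clock value 2x₀ if x₀ < 1 and 2x₀ − 2 if x₀ ≥ 1 (i.e. with the binary expansion of x₀ shifted one bit to the left, dropping the integer bit); conversely such a run exists for every x₀ ∈ (0,2). -/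
variable {Q : Type} [Fintype Q]

/-- Locations of the automaton of Figure 9. -/
inductive L15
  | a | l1 | l2 | l1' | l2' | b | c
  deriving DecidableEq

instance instFintypeL15 : Fintype L15 where
  elems := {.a, .l1, .l2, .l1', .l2', .b, .c}
  complete := by intro x; cases x <;> decide

/-- The automaton of Figure 9: rates `a:1, ℓ₁:2, ℓ₂:4, ℓ₁':1, ℓ₂':2, b:1, c:1`;
transitions (all of discrete cost 0) `a→ℓ₁ (x<1)`, `a→ℓ₂ (x≥1)`, `ℓ₁→ℓ₁' (x=2, x:=0)`,
`ℓ₂→ℓ₂' (x=2, x:=0)`, `ℓ₁'→b (x<2)`, `ℓ₂'→b (x<2)`, `b→c (x=0)`, `b→a`. -/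
def Fig9 : PTA L15 where
  init := .a
  E := {e | e ∈ [(⟨.a, [(Cmp.lt, 1)], false, .l1, 0⟩ : PTrans L15),
    ⟨.a, [(Cmp.ge, 1)], false, .l2, 0⟩,
    ⟨.l1, [(Cmp.eq, 2)], true, .l1', 0⟩,
    ⟨.l2, [(Cmp.eq, 2)], true, .l2', 0⟩,
    ⟨.l1', [(Cmp.lt, 2)], false, .b, 0⟩,
    ⟨.l2', [(Cmp.lt, 2)], false, .b, 0⟩,
    ⟨.b, [(Cmp.eq, 0)], false, .c, 0⟩,
    ⟨.b, [], false, .a, 0⟩]}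
  finE := List.finite_toSet _
  Inv := fun _ => []
  rate := fun q => match q with
    | .l2 => 4
    | .l1 | .l2' => 2
    | _ => 1

lemma disc_a {v c : ℝ} {s' : L15 × ℝ} (h : DiscMove Fig9 (L15.a, v) c s') :
    (v < 1 ∧ s' = (L15.l1, v) ∧ c = 0) ∨ (1 ≤ v ∧ s' = (L15.l2, v) ∧ c = 0) := by
  obtain ⟨e, he, hsrc, htgt, hg, hv2, hinv, hc⟩ := h
  simp only [Fig9, List.mem_cons, List.not_mem_nil, or_false, Set.mem_setOf_eq] at he
  rcases he with rfl|rfl|rfl|rfl|rfl|rfl|rfl|rfl <;>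
    simp_all [PGuard.sat, Cmp.sat, Prod.ext_iff, eq_comm]

lemma disc_l1 {v c : ℝ} {s' : L15 × ℝ} (h : DiscMove Fig9 (L15.l1, v) c s') :
    v = 2 ∧ s' = (L15.l1', 0) ∧ c = 0 := by
  obtain ⟨e, he, hsrc, htgt, hg, hv2, hinv, hc⟩ := h
  simp only [Fig9, List.mem_cons, List.not_mem_nil, or_false, Set.mem_setOf_eq] at he
  rcases he with rfl|rfl|rfl|rfl|rfl|rfl|rfl|rfl <;>
    simp_all [PGuard.sat, Cmp.sat, Prod.ext_iff, eq_comm]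

lemma disc_l2 {v c : ℝ} {s' : L15 × ℝ} (h : DiscMove Fig9 (L15.l2, v) c s') :
    v = 2 ∧ s' = (L15.l2', 0) ∧ c = 0 := by
  obtain ⟨e, he, hsrc, htgt, hg, hv2, hinv, hc⟩ := h
  simp only [Fig9, List.mem_cons, List.not_mem_nil, or_false, Set.mem_setOf_eq] at he
  rcases he with rfl|rfl|rfl|rfl|rfl|rfl|rfl|rfl <;>
    simp_all [PGuard.sat, Cmp.sat, Prod.ext_iff, eq_comm]

lemma disc_l1' {v c : ℝ} {s' : L15 × ℝ} (h : DiscMove Fig9 (L15.l1', v) c s') :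
    v < 2 ∧ s' = (L15.b, v) ∧ c = 0 := by
  obtain ⟨e, he, hsrc, htgt, hg, hv2, hinv, hc⟩ := h
  simp only [Fig9, List.mem_cons, List.not_mem_nil, or_false, Set.mem_setOf_eq] at he
  rcases he with rfl|rfl|rfl|rfl|rfl|rfl|rfl|rfl <;>
    simp_all [PGuard.sat, Cmp.sat, Prod.ext_iff, eq_comm]

lemma disc_l2' {v c : ℝ} {s' : L15 × ℝ} (h : DiscMove Fig9 (L15.l2', v) c s') :
    v < 2 ∧ s' = (L15.b, v) ∧ c = 0 := by
  obtain ⟨e, he, hsrc, htgt, hg, hv2, hinv, hc⟩ := h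
  simp only [Fig9, List.mem_cons, List.not_mem_nil, or_false, Set.mem_setOf_eq] at he
  rcases he with rfl|rfl|rfl|rfl|rfl|rfl|rfl|rfl <;>
    simp_all [PGuard.sat, Cmp.sat, Prod.ext_iff, eq_comm]

lemma rate_a : Fig9.rate L15.a = 1 := rfl
lemma rate_l1 : Fig9.rate L15.l1 = 2 := rfl
lemma rate_l2 : Fig9.rate L15.l2 = 4 := rfl
lemma rate_l1' : Fig9.rate L15.l1' = 1 := rfl
lemma rate_l2' : Fig9.rate L15.l2' = 2 := rfl
/-- For `x₀ ∈ (0,2)`, every run of the Figure 9 automaton from `(a, x₀)`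
that leaves `a` with no delay and reaches `b` (for the first time) with accumulated cost
exactly `4` arrives in `b` with clock value `2·x₀` if `x₀ < 1` and `2·x₀ − 2` if `x₀ ≥ 1`;
and conversely such a run exists. -/
theorem stmt15 (x₀ : ℝ) (h₀ : 0 < x₀) (h₂ : x₀ < 2) :
    (∀ (k : ℕ) (ρ : FinRun Fig9 k), 1 ≤ k →
      ρ.st 0 = (L15.a, x₀) → ρ.d 0 = 0 →
      (ρ.st k).1 = L15.b → (∀ i, 0 < i → i < k → (ρ.st i).1 ≠ L15.b) →
      ∑ i ∈ Finset.range k, ρ.stepCost i = 4 →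
      (ρ.st k).2 = if x₀ < 1 then 2 * x₀ else 2 * x₀ - 2) ∧
    (∃ (k : ℕ) (ρ : FinRun Fig9 k), 1 ≤ k ∧
      ρ.st 0 = (L15.a, x₀) ∧ ρ.d 0 = 0 ∧
      (ρ.st k).1 = L15.b ∧ (∀ i, 0 < i → i < k → (ρ.st i).1 ≠ L15.b) ∧
      ∑ i ∈ Finset.range k, ρ.stepCost i = 4) := by
  constructor
  · intro k ρ hk hst0 hd0 hb hne hsum
    have h1 := ρ.hdisc 0 (by omega)
    rw [hst0, hd0] at h1
    rcases disc_a h1 with ⟨hx1, hs1, hc0⟩ | ⟨hx1, hs1, hc0⟩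
    · -- x₀ < 1 branch
      simp only [add_zero] at hx1 hs1
      have hk2 : 2 ≤ k := by
        by_contra hlt
        have : k = 1 := by omega
        subst this
        rw [hs1] at hb; exact absurd hb (by simp)
      have h2 := ρ.hdisc 1 (by omega)
      rw [hs1] at h2
      obtain ⟨hx2, hs2, hc1⟩ := disc_l1 h2
      have hk3 : 3 ≤ k := by
        by_contra hlt
        have : k = 2 := by omega
        subst this
        rw [hs2] at hb; exact absurd hb (by simp)
      have h3 := ρ.hdisc 2 (by omega)
      rw [hs2] at h3
      obtain ⟨hx3, hs3, hc2⟩ := disc_l1' h3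
      have hk4 : k = 3 := by
        by_contra hlt
        exact hne 3 (by omega) (by omega) (by rw [hs3])
      subst hk4
      rw [Finset.sum_range_succ, Finset.sum_range_succ, Finset.sum_range_one] at hsum
      simp only [FinRun.stepCost, hst0, hs1, hs2, rate_a, rate_l1, rate_l1',
        hd0, hc0, hc1, hc2] at hsum
      rw [hs3, if_pos hx1]
      push_cast at hsum
      simp only []
      linarith
    · -- 1 ≤ x₀ branch
      simp only [add_zero] at hx1 hs1
      have hk2 : 2 ≤ k := by
        by_contra hlt
        have : k = 1 := by omega
        subst this
        rw [hs1] at hb; exact absurd hb (by simp)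
      have h2 := ρ.hdisc 1 (by omega)
      rw [hs1] at h2
      obtain ⟨hx2, hs2, hc1⟩ := disc_l2 h2
      have hk3 : 3 ≤ k := by
        by_contra hlt
        have : k = 2 := by omega
        subst this
        rw [hs2] at hb; exact absurd hb (by simp)
      have h3 := ρ.hdisc 2 (by omega)
      rw [hs2] at h3
      obtain ⟨hx3, hs3, hc2⟩ := disc_l2' h3
      have hk4 : k = 3 := by
        by_contra hlt
        exact hne 3 (by omega) (by omega) (by rw [hs3])
      subst hk4
      rw [Finset.sum_range_succ, Finset.sum_range_succ, Finset.sum_range_one] at hsum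
      simp only [FinRun.stepCost, hst0, hs1, hs2, rate_a, rate_l2, rate_l2',
        hd0, hc0, hc1, hc2] at hsum
      rw [hs3, if_neg (by linarith)]
      push_cast at hsum
      simp only []
      linarith
  · rcases lt_or_ge x₀ 1 with hx | hx
    · refine ⟨3, ⟨fun i => match i with
        | 0 => (L15.a, x₀) | 1 => (L15.l1, x₀) | 2 => (L15.l1', 0) | _ => (L15.b, 2*x₀),
        fun i => match i with
        | 0 => 0 | 1 => 2 - x₀ | 2 => 2*x₀ | _ => 0,
        fun _ => 0, ?_, ?_⟩, by omega, rfl, rfl, rfl, ?_, ?_⟩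
      · intro i hi
        refine ⟨?_, fun t' _ _ => by intro p hp; simp [Fig9] at hp⟩
        interval_cases i <;> simp <;> linarith
      · intro i hi
        interval_cases i
        · exact ⟨⟨.a, [(Cmp.lt, 1)], false, .l1, 0⟩, by simp [Fig9], rfl, rfl,
            by intro p hp; simp at hp; subst hp; simpa [Cmp.sat] using hx,
            by norm_num, by intro p hp; simp [Fig9] at hp, by norm_num⟩
        · exact ⟨⟨.l1, [(Cmp.eq, 2)], true, .l1', 0⟩, by simp [Fig9], rfl, rfl,
            by intro p hp; simp at hp; subst hp; simp [Cmp.sat],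
            by norm_num, by intro p hp; simp [Fig9] at hp, by norm_num⟩
        · exact ⟨⟨.l1', [(Cmp.lt, 2)], false, .b, 0⟩, by simp [Fig9], rfl, rfl,
            by intro p hp; simp at hp; subst hp; simp [Cmp.sat]; linarith,
            by norm_num, by intro p hp; simp [Fig9] at hp, by norm_num⟩
      · intro i h1i h3i
        interval_cases i <;> simp
      · rw [Finset.sum_range_succ, Finset.sum_range_succ, Finset.sum_range_one]
        simp only [FinRun.stepCost, rate_a, rate_l1, rate_l1']
        push_cast
        ring
    · refine ⟨3, ⟨fun i => match i with
        | 0 => (L15.a, x₀) | 1 => (L15.l2, x₀) | 2 => (L15.l2', 0) | _ => (L15.b, 2*x₀ - 2),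
        fun i => match i with
        | 0 => 0 | 1 => 2 - x₀ | 2 => 2*x₀ - 2 | _ => 0,
        fun _ => 0, ?_, ?_⟩, by omega, rfl, rfl, rfl, ?_, ?_⟩
      · intro i hi
        refine ⟨?_, fun t' _ _ => by intro p hp; simp [Fig9] at hp⟩
        interval_cases i <;> simp <;> linarith
      · intro i hi
        interval_cases i
        · exact ⟨⟨.a, [(Cmp.ge, 1)], false, .l2, 0⟩, by simp [Fig9], rfl, rfl,
            by intro p hp; simp at hp; subst hp; simpa [Cmp.sat] using hx,
            by norm_num, by intro p hp; simp [Fig9] at hp, by norm_num⟩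
        · exact ⟨⟨.l2, [(Cmp.eq, 2)], true, .l2', 0⟩, by simp [Fig9], rfl, rfl,
            by intro p hp; simp at hp; subst hp; simp [Cmp.sat],
            by norm_num, by intro p hp; simp [Fig9] at hp, by norm_num⟩
        · exact ⟨⟨.l2', [(Cmp.lt, 2)], false, .b, 0⟩, by simp [Fig9], rfl, rfl,
            by intro p hp; simp at hp; subst hp; simp [Cmp.sat]; linarith,
            by norm_num, by intro p hp; simp [Fig9] at hp, by norm_num⟩
      · intro i h1i h3i
        interval_cases i <;> simp
      · rw [Finset.sum_range_succ, Finset.sum_range_succ, Finset.sum_range_one]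
        simp only [FinRun.stepCost, rate_a, rate_l2, rate_l2']
        push_cast
        ring
end
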